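/- Let R be a reduced root system with base Π and positive roots R_+, and let 𝒦 = 𝒦(Π) be the cascade. Then R_+ is the disjoint union of the sets Γ^K = {α ∈ R^K : ⟨α, ε_K^∨⟩ > 0} for K ∈ 𝒦. -/

import Mathlib

open Finset Module

open scoped Classical

/-- A reduced crystallographic root system in the `k`-vector space `V`, recorded through
the finite set `roots` of roots, the coroot linear forms `corootForm α = ⟨·, α^∨⟩`, and
the integer Cartan pairing `pairInt β α = ⟨β, α^∨⟩ ∈ ℤ` (meaningful when `α, β` are roots). -/
structure RootSystemData (k V : Type*) [Field k] [CharZero k]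
    [AddCommGroup V] [Module k V] where
  /-- the (finite) set of roots -/
  roots : Finset V
  /-- `corootForm α` is the linear form `⟨·, α^∨⟩` associated to the coroot of a root `α` -/
  corootForm : V → V →ₗ[k] k
  /-- the integer `⟨β, α^∨⟩`, recorded as `pairInt β α` -/
  pairInt : V → V → ℤ
  ne_zero : ∀ α ∈ roots, α ≠ (0 : V)
  span_eq_top : Submodule.span k (roots : Set V) = ⊤
  pair_compat : ∀ α ∈ roots, ∀ β ∈ roots, ((pairInt β α : ℤ) : k) = corootForm α β
  pair_self : ∀ α ∈ roots, pairInt α α = 2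
  reflect_mem : ∀ α ∈ roots, ∀ β ∈ roots, β - pairInt β α • α ∈ roots
  reduced : ∀ α ∈ roots, ∀ c : k, c • α ∈ roots → c = 1 ∨ c = -1

namespace RootSystemData

variable {k V : Type*} [Field k] [CharZero k] [AddCommGroup V] [Module k V]
variable (P : RootSystemData k V)

/-- A base (set of simple roots) of the root system: a linearly independent set of roots
such that every root is a nonnegative or nonpositive integral combination of its elements. -/
structure IsBase (B : Finset V) : Prop where
  subset : B ⊆ P.roots
  indep : LinearIndependent k (fun b : B => (b : V))
  pos_or_neg : ∀ α ∈ P.roots,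
    α ∈ AddSubmonoid.closure (B : Set V) ∨ -α ∈ AddSubmonoid.closure (B : Set V)

/-- The positive roots `R₊` with respect to a base `B`. -/
noncomputable def posRoots (B : Finset V) : Finset V :=
  P.roots.filter fun α => α ∈ AddSubmonoid.closure (B : Set V)

/-- `R^S = R ∩ ℤS`. -/
noncomputable def rootsOf (S : Finset V) : Finset V :=
  P.roots.filter fun α => α ∈ AddSubgroup.closure (S : Set V)

/-- `R₊^S = R ∩ ℕS`. -/
noncomputable def posRootsOf (S : Finset V) : Finset V :=
  P.roots.filter fun α => α ∈ AddSubmonoid.closure (S : Set V)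

/-- Two simple roots are linked in the Dynkin diagram of `S ⊆ Δ` when they can be joined
by a chain in `S` of consecutively non-orthogonal elements. -/
def Linked (S : Finset V) : V → V → Prop :=
  Relation.ReflTransGen fun a b => a ∈ S ∧ b ∈ S ∧ P.pairInt a b ≠ 0

/-- A subset of a base is connected if its Dynkin diagram is connected (and nonempty). -/
def IsConnected (S : Finset V) : Prop :=
  S.Nonempty ∧ ∀ a ∈ S, ∀ b ∈ S, P.Linked S a b

/-- `ε` is the highest root of `R^S`: a positive root of `R^S` such that `ε - α ∈ ℕS`
for every root `α ∈ R^S`. -/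
def IsHighestRoot (S : Finset V) (ε : V) : Prop :=
  ε ∈ P.posRootsOf S ∧ ∀ α ∈ P.rootsOf S, ε - α ∈ AddSubmonoid.closure (S : Set V)

/-- The highest root `ε_S` of `R^S` (junk value `0` if it does not exist). -/
noncomputable def highestRoot (S : Finset V) : V :=
  if h : ∃ ε, P.IsHighestRoot S ε then h.choose else 0

/-- The connected component of `a` in the Dynkin diagram of `S`. -/
noncomputable def component (S : Finset V) (a : V) : Finset V :=
  S.filter fun b => P.Linked S a b

/-- The connected components of the Dynkin diagram of `S`. -/
noncomputable def components (S : Finset V) : Finset (Finset V) :=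
  S.image fun a => P.component S a

/-- `{α ∈ S : ⟨α, ε_S^∨⟩ = 0}`. -/
noncomputable def zeroPart (S : Finset V) : Finset V :=
  S.filter fun a => P.pairInt a (P.highestRoot S) = 0

/-- Fuel-based auxiliary recursion for the cascade `𝒦(S)`; for an actual root system the
recursion terminates in at most `card S` steps, so fuel `card S + 1` computes `𝒦(S)`. -/
noncomputable def cascadeAux : ℕ → Finset V → Finset (Finset V)
  | 0, _ => ∅
  | n + 1, S => (P.components S).biUnion fun C => insert C (cascadeAux n (P.zeroPart C))

/-- The cascade `𝒦(S)`, defined recursively by `𝒦(∅) = ∅`,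
`𝒦(S) = 𝒦(S₁) ∪ ⋯ ∪ 𝒦(S_r)` if `S` has connected components `S₁, …, S_r`, and
`𝒦(S) = {S} ∪ 𝒦({α ∈ S : ⟨α, ε_S^∨⟩ = 0})` if `S` is connected. -/
noncomputable def cascade (S : Finset V) : Finset (Finset V) :=
  P.cascadeAux (S.card + 1) S

/-- `Γ^K = {α ∈ R^K : ⟨α, ε_K^∨⟩ > 0}`. -/
noncomputable def gamma (K : Finset V) : Finset V :=
  (P.rootsOf K).filter fun α => 0 < P.pairInt α (P.highestRoot K)


lemma coroot_self {α : V} (hα : α ∈ P.roots) : P.corootForm α α = 2 := by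
  have := P.pair_compat α hα α hα
  rw [P.pair_self α hα] at this
  exact_mod_cast this.symm

lemma neg_mem {α : V} (hα : α ∈ P.roots) : -α ∈ P.roots := by
  have h := P.reflect_mem α hα α hα
  rw [P.pair_self α hα] at h
  have e : α - (2:ℤ) • α = -α := by rw [two_zsmul]; abel
  rwa [e] at h

/-- reflection in the root `α` -/
def rfl' (α : V) (x : V) : V := x - P.corootForm α x • α

lemma rfl'_mem {α β : V} (hα : α ∈ P.roots) (hβ : β ∈ P.roots) : P.rfl' α β ∈ P.roots := by
  have h := P.reflect_mem α hα β hβ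
  have : P.rfl' α β = β - P.pairInt β α • α := by
    rw [rfl', ← P.pair_compat α hα β hβ, Int.cast_smul_eq_zsmul]
  rwa [this]

lemma pairInt_neg_left {α β : V} (hα : α ∈ P.roots) (hβ : β ∈ P.roots) :
    P.pairInt (-β) α = -P.pairInt β α := by
  have h1 := P.pair_compat α hα (-β) (P.neg_mem hβ)
  have h2 := P.pair_compat α hα β hβ
  rw [map_neg, ← h2] at h1
  exact_mod_cast h1

lemma pairInt_neg_self {α : V} (hα : α ∈ P.roots) : P.pairInt (-α) α = -2 := by
  rw [P.pairInt_neg_left hα hα, P.pair_self α hα]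

/-- the sequence of coefficients of `(s_β s_α)^[n] α` in the plane spanned by `α, β` -/
def seqAB (p q : ℤ) : ℕ → ℤ × ℤ
  | 0 => (1, 0)
  | n + 1 => (-(seqAB p q n).1 - p * (seqAB p q n).2,
      q * (seqAB p q n).1 + (p * q - 1) * (seqAB p q n).2)

lemma seqAB_rec (p q : ℤ) (n : ℕ) :
    (seqAB p q (n + 2)).2 = (p * q - 2) * (seqAB p q (n + 1)).2 - (seqAB p q n).2 := by
  show q * (seqAB p q (n+1)).1 + (p * q - 1) * (seqAB p q (n+1)).2 = _
  show q * (-(seqAB p q n).1 - p * (seqAB p q n).2) + (p*q-1) *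
      (q * (seqAB p q n).1 + (p * q - 1) * (seqAB p q n).2) = _
  show _ = (p*q-2) * (q * (seqAB p q n).1 + (p * q - 1) * (seqAB p q n).2) - (seqAB p q n).2
  ring

lemma seqAB_abs_lt (p q : ℤ) (hq : q ≠ 0) (hm : 2 ≤ |p * q - 2|) (n : ℕ) :
    |(seqAB p q n).2| < |(seqAB p q (n + 1)).2| := by
  induction n with
  | zero =>
      show |(0:ℤ)| < |q * 1 + (p*q-1)*0|
      simpa using abs_pos.2 hq
  | succ n ih =>
      rw [seqAB_rec]
      set b1 := (seqAB p q (n+1)).2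
      set b0 := (seqAB p q n).2
      have h1 : |(p*q-2) * b1| - |b0| ≤ |(p*q-2) * b1 - b0| := by
        have := abs_sub_abs_le_abs_sub ((p*q-2)*b1) b0
        linarith [this]
      have h2 : 2 * |b1| ≤ |(p*q-2) * b1| := by
        rw [abs_mul]
        have : 0 ≤ |b1| := abs_nonneg _
        nlinarith
      linarith

lemma seqAB_snd_injective (p q : ℤ) (hq : q ≠ 0) (hm : 2 ≤ |p * q - 2|) :
    Function.Injective fun n => (seqAB p q n).2 := by
  have mono : StrictMono fun n => |(seqAB p q n).2| :=
    strictMono_nat_of_lt_succ (fun n => seqAB_abs_lt p q hq hm n)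
  intro a b hab
  by_contra hne
  rcases Nat.lt_or_ge a b with h | h
  · exact absurd (congrArg (|·|) hab) (mono h).ne
  · exact absurd (congrArg (|·|) hab.symm) (mono (lt_of_le_of_ne h (Ne.symm hne))).ne


lemma rfl'_combo {α β : V} (hα : α ∈ P.roots) (hβ : β ∈ P.roots) (a b : ℤ) :
    P.rfl' β (P.rfl' α (a • α + b • β)) =
      (-a - P.pairInt β α * b) • α +
      (P.pairInt α β * a + (P.pairInt β α * P.pairInt α β - 1) * b) • β := by
  set p := P.pairInt β α
  set q := P.pairInt α β
  have hpa : P.corootForm α α = 2 := P.coroot_self hα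
  have hpb : P.corootForm β β = 2 := P.coroot_self hβ
  have hp : P.corootForm α β = (p : k) := (P.pair_compat α hα β hβ).symm
  have hq : P.corootForm β α = (q : k) := (P.pair_compat β hβ α hα).symm
  simp only [rfl', map_add, map_sub, map_zsmul, map_smul, hpa, hpb, hp, hq,
    zsmul_eq_mul, smul_eq_mul]
  push_cast
  module

/-- Master finiteness lemma: the Cartan integers of two non-proportional roots cannot
have product outside `[1,3]` unless `⟨α,β^∨⟩ = 0`. -/
lemma no_big {α β : V} (hα : α ∈ P.roots) (hβ : β ∈ P.roots) (h1 : β ≠ α) (h2 : β ≠ -α)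
    (hq : P.pairInt α β ≠ 0) (hm : 2 ≤ |P.pairInt β α * P.pairInt α β - 2|) : False := by
  set p := P.pairInt β α
  set q := P.pairInt α β
  set g : V → V := fun x => P.rfl' β (P.rfl' α x) with hg
  have key : ∀ n : ℕ, g^[n] α = (seqAB p q n).1 • α + (seqAB p q n).2 • β ∧
      g^[n] α ∈ P.roots := by
    intro n
    induction n with
    | zero => exact ⟨by simp [seqAB], by simpa using hα⟩
    | succ n ih =>
        refine ⟨?_, ?_⟩
        · rw [Function.iterate_succ_apply', ih.1]
          exact P.rfl'_combo hα hβ _ _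
        · rw [Function.iterate_succ_apply']
          exact P.rfl'_mem hβ (P.rfl'_mem hα ih.2)
  have hinj : Function.Injective fun n : ℕ => g^[n] α := by
    intro n m hnm
    have hnm' : g^[n] α = g^[m] α := hnm
    by_contra hne
    have hb := seqAB_snd_injective p q hq hm
    have hbne : (seqAB p q n).2 ≠ (seqAB p q m).2 := fun h => hne (hb h)
    have heq : (seqAB p q n).1 • α + (seqAB p q n).2 • β
        = (seqAB p q m).1 • α + (seqAB p q m).2 • β := by
      rw [← (key n).1, ← (key m).1, hnm']
    have heq2 : ((seqAB p q n).2 - (seqAB p q m).2) • β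
        = ((seqAB p q m).1 - (seqAB p q n).1) • α := by
      linear_combination (norm := module) heq
    set d : ℤ := (seqAB p q n).2 - (seqAB p q m).2 with hdd
    set e : ℤ := (seqAB p q m).1 - (seqAB p q n).1 with hee
    have hd : d ≠ 0 := sub_ne_zero.2 hbne
    have hdk : (d : k) ≠ 0 := Int.cast_ne_zero.2 hd
    have hcast : (d : k) • β = (e : k) • α := by
      rw [Int.cast_smul_eq_zsmul, Int.cast_smul_eq_zsmul]
      exact heq2
    have hβeq : β = ((e : k) / (d : k)) • α := by
      have : β = (d : k)⁻¹ • ((e : k) • α) := by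
        rw [← hcast, inv_smul_smul₀ hdk]
      rw [this, smul_smul, div_eq_inv_mul]
    rcases P.reduced α hα ((e : k) / (d : k)) (by rw [← hβeq]; exact hβ) with h | h
    · exact h1 (by rw [hβeq, h, one_smul])
    · exact h2 (by rw [hβeq, h, neg_smul, one_smul])
  have : (Set.range fun n : ℕ => g^[n] α).Infinite := Set.infinite_range_of_injective hinj
  refine this (Set.Finite.subset P.roots.finite_toSet ?_)
  rintro x ⟨n, rfl⟩
  exact (key n).2


/-- Sign and size of products of Cartan integers for non-proportional roots. -/
lemma pair_sign {α β : V} (hα : α ∈ P.roots) (hβ : β ∈ P.roots) (h1 : β ≠ α) (h2 : β ≠ -α) :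
    (P.pairInt β α = 0 ∧ P.pairInt α β = 0) ∨
      (1 ≤ P.pairInt β α * P.pairInt α β ∧ P.pairInt β α * P.pairInt α β ≤ 3) := by
  by_cases hq : P.pairInt α β = 0
  · by_cases hp : P.pairInt β α = 0
    · exact Or.inl ⟨hp, hq⟩
    · exfalso
      refine P.no_big hβ hα (fun h => h1 h.symm) (fun h => h2 (by rw [h]; abel)) hp ?_
      rw [hq, zero_mul]
      norm_num
  · by_cases hbig : 2 ≤ |P.pairInt β α * P.pairInt α β - 2|
    · exact absurd (P.no_big hα hβ h1 h2 hq hbig) (fun h => h)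
    · right
      push_neg at hbig
      rw [abs_lt] at hbig
      omega

lemma pair_sign_zero {α β : V} (hα : α ∈ P.roots) (hβ : β ∈ P.roots) (h1 : β ≠ α)
    (h2 : β ≠ -α) : P.pairInt β α = 0 ↔ P.pairInt α β = 0 := by
  rcases P.pair_sign hα hβ h1 h2 with ⟨h, h'⟩ | ⟨h, h'⟩
  · simp [h, h']
  · constructor <;> intro hz <;> rw [hz] at h <;> simp at h

lemma pair_sign_pos {α β : V} (hα : α ∈ P.roots) (hβ : β ∈ P.roots) (h1 : β ≠ α)
    (h2 : β ≠ -α) (hp : 0 < P.pairInt β α) : 0 < P.pairInt α β := by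
  rcases P.pair_sign hα hβ h1 h2 with ⟨h, h'⟩ | ⟨h, h'⟩
  · omega
  · nlinarith

lemma pair_sign_pos' {α β : V} (hα : α ∈ P.roots) (hβ : β ∈ P.roots) (h1 : β ≠ α)
    (h2 : β ≠ -α) (hp : 0 < P.pairInt α β) : 0 < P.pairInt β α := by
  rcases P.pair_sign hα hβ h1 h2 with ⟨h, h'⟩ | ⟨h, h'⟩
  · omega
  · nlinarith

/-- Root string lemma: if `⟨β, α^∨⟩ > 0` and `β ≠ α` then `β - α` is a root. -/
lemma sub_mem {α β : V} (hα : α ∈ P.roots) (hβ : β ∈ P.roots) (h1 : β ≠ α)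
    (hp : 0 < P.pairInt β α) : β - α ∈ P.roots := by
  have h2 : β ≠ -α := by
    intro h
    rw [h] at hp
    rw [P.pairInt_neg_self hα] at hp
    omega
  have hq : 0 < P.pairInt α β := P.pair_sign_pos hα hβ h1 h2 hp
  have hle : P.pairInt β α * P.pairInt α β ≤ 3 := by
    rcases P.pair_sign hα hβ h1 h2 with ⟨h, _⟩ | ⟨_, h⟩
    · omega
    · exact h
  have : P.pairInt β α = 1 ∨ P.pairInt α β = 1 := by
    by_contra hcon
    push_neg at hcon
    obtain ⟨hne1, hne2⟩ := hcon
    have h2p : 2 ≤ P.pairInt β α := by omega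
    have h2q : 2 ≤ P.pairInt α β := by omega
    nlinarith
  rcases this with h | h
  · have := P.reflect_mem α hα β hβ
    rwa [h, one_smul] at this
  · have := P.reflect_mem β hβ α hα
    rw [h, one_smul] at this
    have := P.neg_mem this
    rwa [neg_sub] at this
/-- Root string lemma: if `⟨β, α^∨⟩ < 0` and `β ≠ -α` then `β + α` is a root. -/
lemma add_mem {α β : V} (hα : α ∈ P.roots) (hβ : β ∈ P.roots) (h2 : β ≠ -α)
    (hp : P.pairInt β α < 0) : β + α ∈ P.roots := by
  have h1 : β ≠ α := by
    intro h; rw [h, P.pair_self α hα] at hp; omega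
  have hq : P.pairInt α β < 0 := by
    rcases P.pair_sign hα hβ h1 h2 with ⟨h, h'⟩ | ⟨h, h'⟩
    · omega
    · nlinarith
  have hge : 1 ≤ P.pairInt β α * P.pairInt α β := by
    rcases P.pair_sign hα hβ h1 h2 with ⟨h, _⟩ | ⟨h, _⟩
    · omega
    · exact h
  have hle : P.pairInt β α * P.pairInt α β ≤ 3 := by
    rcases P.pair_sign hα hβ h1 h2 with ⟨h, h'⟩ | ⟨_, h⟩
    · omega
    · exact h
  have : P.pairInt β α = -1 ∨ P.pairInt α β = -1 := by
    by_contra hcon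
    push_neg at hcon
    obtain ⟨hne1, hne2⟩ := hcon
    have h2p : P.pairInt β α ≤ -2 := by omega
    have h2q : P.pairInt α β ≤ -2 := by omega
    nlinarith
  rcases this with h | h
  · have := P.reflect_mem α hα β hβ
    rw [h] at this
    have e : β - (-1 : ℤ) • α = β + α := by simp
    rwa [e] at this
  · have := P.reflect_mem β hβ α hα
    rw [h] at this
    have e : α - (-1 : ℤ) • β = α + β := by simp
    rw [e] at this
    rwa [add_comm]


section Base

lemma mem_ncl_iff {S : Finset V} {x : V} :
    x ∈ AddSubmonoid.closure (S : Set V) ↔ ∃ c : V → ℕ, x = ∑ a ∈ S, c a • a := by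
  constructor
  · intro hx
    induction hx using AddSubmonoid.closure_induction with
    | mem a ha =>
        refine ⟨fun b => if b = a then 1 else 0, ?_⟩
        have : ∀ b ∈ S, (if b = a then (1:ℕ) else 0) • b = if b = a then b else 0 := by
          intro b _; split <;> simp
        rw [Finset.sum_congr rfl this, Finset.sum_ite_eq' S a (fun b => b), if_pos (Finset.mem_coe.1 ha)]
    | zero => exact ⟨fun _ => 0, by simp⟩
    | add x y hx hy ihx ihy =>
        obtain ⟨c1, hc1⟩ := ihx
        obtain ⟨c2, hc2⟩ := ihy
        refine ⟨c1 + c2, ?_⟩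
        rw [hc1, hc2, ← Finset.sum_add_distrib]
        exact Finset.sum_congr rfl fun a _ => by rw [Pi.add_apply, add_smul]
  · rintro ⟨c, rfl⟩
    exact sum_mem fun a ha => nsmul_mem (AddSubmonoid.subset_closure ha) _
lemma mem_zcl_of_mem_ncl {S : Finset V} {x : V} (h : x ∈ AddSubmonoid.closure (S : Set V)) :
    x ∈ AddSubgroup.closure (S : Set V) := by
  refine AddSubmonoid.closure_induction (fun y hy => AddSubgroup.subset_closure hy)
    (AddSubgroup.zero_mem _) (fun y z _ _ h1 h2 => AddSubgroup.add_mem _ h1 h2) h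

lemma mem_zcl_iff {S : Finset V} {x : V} :
    x ∈ AddSubgroup.closure (S : Set V) ↔ ∃ c : V → ℤ, x = ∑ a ∈ S, c a • a := by
  constructor
  · intro hx
    induction hx using AddSubgroup.closure_induction with
    | mem a ha =>
        refine ⟨fun b => if b = a then 1 else 0, ?_⟩
        have : ∀ b ∈ S, (if b = a then (1:ℤ) else 0) • b = if b = a then b else 0 := by
          intro b _; split <;> simp
        rw [Finset.sum_congr rfl this, Finset.sum_ite_eq' S a (fun b => b), if_pos (Finset.mem_coe.1 ha)]
    | zero => exact ⟨fun _ => 0, by simp⟩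
    | add x y hx hy ihx ihy =>
        obtain ⟨c1, hc1⟩ := ihx
        obtain ⟨c2, hc2⟩ := ihy
        refine ⟨c1 + c2, ?_⟩
        rw [hc1, hc2, ← Finset.sum_add_distrib]
        exact Finset.sum_congr rfl fun a _ => by rw [Pi.add_apply, add_smul]
    | neg x hx ih =>
        obtain ⟨c, hc⟩ := ih
        refine ⟨-c, ?_⟩
        rw [hc, ← Finset.sum_neg_distrib]
        exact Finset.sum_congr rfl fun a _ => by rw [Pi.neg_apply, neg_smul]
  · rintro ⟨c, rfl⟩
    exact sum_mem fun a ha => zsmul_mem (AddSubgroup.subset_closure ha) _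

variable (Δ : Finset V)

/-- the coefficients of `x` on the base `Δ` (junk if `x` is not a `ℕ`-combination) -/
noncomputable def coeffs (x : V) : V → ℕ :=
  if h : ∃ c : V → ℕ, x = ∑ a ∈ Δ, c a • a then h.choose else fun _ => 0

/-- the height of `x` relative to `Δ` -/
noncomputable def htF (x : V) : ℕ := ∑ a ∈ Δ, coeffs Δ x a

/-- the support of `x` relative to `Δ` -/
noncomputable def suppF (x : V) : Finset V := Δ.filter fun a => coeffs Δ x a ≠ 0

lemma coeffs_spec {x : V} (hx : x ∈ AddSubmonoid.closure (Δ : Set V)) :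
    x = ∑ a ∈ Δ, coeffs Δ x a • a := by
  obtain ⟨c, hc⟩ := mem_ncl_iff.1 hx
  rw [coeffs, dif_pos ⟨c, hc⟩]
  exact Exists.choose_spec (⟨c, hc⟩ : ∃ c : V → ℕ, x = ∑ a ∈ Δ, c a • a)

variable {P} in
lemma base_indep_k (hb : P.IsBase Δ) {f g : V → k}
    (h : ∑ a ∈ Δ, f a • a = ∑ a ∈ Δ, g a • a) : ∀ a ∈ Δ, f a = g a := by
  have hli := hb.indep
  rw [Fintype.linearIndependent_iff] at hli
  have hsum : ∑ i : {x // x ∈ Δ}, (f i - g i) • (i : V) = 0 := by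
    rw [Finset.univ_eq_attach]
    simp only [sub_smul]
    rw [Finset.sum_sub_distrib, Finset.sum_attach Δ (fun a => f a • a),
      Finset.sum_attach Δ (fun a => g a • a), h, sub_self]
  intro a ha
  have := hli (fun i => f i - g i) hsum ⟨a, ha⟩
  exact sub_eq_zero.1 this

variable {P Δ} in
lemma coeffs_eq (hb : P.IsBase Δ) {x : V} {c : V → ℕ} (hc : x = ∑ a ∈ Δ, c a • a)
    {a : V} (ha : a ∈ Δ) : coeffs Δ x a = c a := by
  have hx : x ∈ AddSubmonoid.closure (Δ : Set V) := mem_ncl_iff.2 ⟨c, hc⟩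
  have h1 := coeffs_spec Δ hx
  have key : ∑ b ∈ Δ, ((coeffs Δ x b : k)) • b = ∑ b ∈ Δ, ((c b : k)) • b := by
    simp only [Nat.cast_smul_eq_nsmul]
    rw [← h1, ← hc]
  exact_mod_cast base_indep_k Δ hb key a ha

variable {P Δ} in
lemma coeffs_zero (hb : P.IsBase Δ) {a : V} (ha : a ∈ Δ) : coeffs Δ (0 : V) a = 0 :=
  coeffs_eq hb (c := fun _ => 0) (by simp) ha

variable {P Δ} in
lemma coeffs_add (hb : P.IsBase Δ) {x y : V} (hx : x ∈ AddSubmonoid.closure (Δ : Set V))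
    (hy : y ∈ AddSubmonoid.closure (Δ : Set V)) {a : V} (ha : a ∈ Δ) :
    coeffs Δ (x + y) a = coeffs Δ x a + coeffs Δ y a := by
  refine coeffs_eq hb (c := fun b => coeffs Δ x b + coeffs Δ y b) ?_ ha
  conv_lhs => rw [coeffs_spec Δ hx, coeffs_spec Δ hy]
  rw [← Finset.sum_add_distrib]
  exact Finset.sum_congr rfl fun b _ => (add_smul _ _ _).symm

variable {P Δ} in
lemma htF_add (hb : P.IsBase Δ) {x y : V} (hx : x ∈ AddSubmonoid.closure (Δ : Set V))
    (hy : y ∈ AddSubmonoid.closure (Δ : Set V)) :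
    htF Δ (x + y) = htF Δ x + htF Δ y := by
  rw [htF, htF, htF, ← Finset.sum_add_distrib]
  exact Finset.sum_congr rfl fun a ha => coeffs_add hb hx hy ha

variable {P Δ} in
lemma htF_eq_zero_iff (hb : P.IsBase Δ) {x : V} (hx : x ∈ AddSubmonoid.closure (Δ : Set V)) :
    htF Δ x = 0 ↔ x = 0 := by
  constructor
  · intro h
    rw [coeffs_spec Δ hx]
    refine Finset.sum_eq_zero fun a ha => ?_
    have : coeffs Δ x a = 0 := by
      rw [htF] at h
      exact (Finset.sum_eq_zero_iff).1 h a ha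
    rw [this, zero_smul]
  · rintro rfl
    exact Finset.sum_eq_zero fun a ha => coeffs_zero hb ha




variable {P Δ} in
lemma suppF_subset {x : V} : suppF Δ x ⊆ Δ := Finset.filter_subset _ _

variable {P Δ} in
lemma mem_ncl_iff_supp (hb : P.IsBase Δ) {S : Finset V} (hS : S ⊆ Δ) {x : V} :
    x ∈ AddSubmonoid.closure (S : Set V) ↔
      x ∈ AddSubmonoid.closure (Δ : Set V) ∧ suppF Δ x ⊆ S := by
  constructor
  · intro hx
    obtain ⟨c, hc⟩ := mem_ncl_iff.1 hx
    have hrep : x = ∑ a ∈ Δ, (if a ∈ S then c a else 0) • a := by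
      rw [hc, ← Finset.sum_subset hS (fun a haΔ haS => by rw [if_neg haS, zero_smul])]
      exact Finset.sum_congr rfl fun a ha => by rw [if_pos ha]
    have hmem : x ∈ AddSubmonoid.closure (Δ : Set V) := mem_ncl_iff.2 ⟨_, hrep⟩
    refine ⟨hmem, fun a ha => ?_⟩
    rw [suppF, Finset.mem_filter] at ha
    have := coeffs_eq hb hrep ha.1
    by_contra haS
    rw [this, if_neg haS] at ha
    exact ha.2 rfl
  · rintro ⟨hx, hsupp⟩
    refine mem_ncl_iff.2 ⟨coeffs Δ x, ?_⟩
    calc x = ∑ a ∈ Δ, coeffs Δ x a • a := coeffs_spec Δ hx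
    _ = ∑ a ∈ S, coeffs Δ x a • a := by
        refine (Finset.sum_subset hS fun a haΔ haS => ?_).symm
        have : coeffs Δ x a = 0 := by
          by_contra h
          exact haS (hsupp (Finset.mem_filter.2 ⟨haΔ, h⟩))
        simp [this]

variable {P Δ} in
lemma suppF_eq_empty (hb : P.IsBase Δ) {x : V} (hx : x ∈ AddSubmonoid.closure (Δ : Set V))
    (h : suppF Δ x = ∅) : x = 0 := by
  rw [coeffs_spec Δ hx]
  refine Finset.sum_eq_zero fun a ha => ?_
  have : coeffs Δ x a = 0 := by
    by_contra hc
    have : a ∈ suppF Δ x := Finset.mem_filter.2 ⟨ha, hc⟩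
    rw [h] at this
    exact absurd this (Finset.notMem_empty a)
  simp [this]

variable {P} in
/-- expansion of the Cartan integer of a sum of roots -/
lemma pairInt_expand {γ x : V} (hγ : γ ∈ P.roots) (hx : x ∈ P.roots) {S : Finset V}
    (hS : ∀ a ∈ S, a ∈ P.roots) {c : V → ℕ} (hrep : x = ∑ a ∈ S, c a • a) :
    P.pairInt x γ = ∑ a ∈ S, (c a : ℤ) * P.pairInt a γ := by
  have hk : ((P.pairInt x γ : ℤ) : k) = ((∑ a ∈ S, (c a : ℤ) * P.pairInt a γ : ℤ) : k) := by
    rw [P.pair_compat γ hγ x hx]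
    conv_lhs => rw [hrep]
    rw [map_sum]
    push_cast
    refine Finset.sum_congr rfl fun a ha => ?_
    rw [map_nsmul, ← P.pair_compat γ hγ a (hS a ha)]
    push_cast
    try ring
  exact_mod_cast hk

variable {P Δ} in
lemma not_both_pos (hb : P.IsBase Δ) {α : V} (hα : α ∈ P.roots)
    (h1 : α ∈ AddSubmonoid.closure (Δ : Set V)) (h2 : -α ∈ AddSubmonoid.closure (Δ : Set V)) :
    False := by
  have hsum : (0 : V) = α + -α := by abel
  have hcoe : ∀ a ∈ Δ, coeffs Δ α a = 0 := by
    intro a ha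
    have h0 : coeffs Δ (α + -α) a = coeffs Δ α a + coeffs Δ (-α) a := coeffs_add hb h1 h2 ha
    rw [add_neg_cancel] at h0
    rw [coeffs_zero hb ha] at h0
    omega
  have : α = 0 := by
    rw [coeffs_spec Δ h1]
    exact Finset.sum_eq_zero fun a ha => by simp [hcoe a ha]
  exact P.ne_zero α hα this

variable {P Δ} in
lemma ne_neg_of_pos (hb : P.IsBase Δ) {α β : V} (hα : α ∈ P.roots)
    (h1 : α ∈ AddSubmonoid.closure (Δ : Set V)) (h2 : β ∈ AddSubmonoid.closure (Δ : Set V)) :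
    α ≠ -β := by
  intro h
  refine not_both_pos hb hα h1 ?_
  rw [h, neg_neg]
  exact h2

variable {P Δ} in
/-- coefficients of a simple root -/
lemma coeffs_simple (hb : P.IsBase Δ) {a : V} (ha : a ∈ Δ) {b : V} (hbΔ : b ∈ Δ) :
    coeffs Δ a b = if b = a then 1 else 0 := by
  refine coeffs_eq hb (c := fun x => if x = a then 1 else 0) ?_ hbΔ
  have : ∀ x ∈ Δ, (if x = a then (1:ℕ) else 0) • x = if x = a then x else 0 := by
    intro x _; split <;> simp
  rw [Finset.sum_congr rfl this, Finset.sum_ite_eq' Δ a (fun x => x), if_pos ha]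

variable {P Δ} in
lemma htF_simple (hb : P.IsBase Δ) {a : V} (ha : a ∈ Δ) : htF Δ a = 1 := by
  rw [htF]
  have : ∀ b ∈ Δ, coeffs Δ a b = if b = a then 1 else 0 := fun b hbΔ => coeffs_simple hb ha hbΔ
  rw [Finset.sum_congr rfl this, Finset.sum_ite_eq' Δ a (fun _ => 1), if_pos ha]

variable {P Δ} in
/-- distinct simple roots have non-positive pairing -/
lemma pair_simple_nonpos (hb : P.IsBase Δ) {a b : V} (ha : a ∈ Δ) (hbm : b ∈ Δ)
    (hne : a ≠ b) : P.pairInt a b ≤ 0 := by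
  by_contra hpos
  push_neg at hpos
  have haR : a ∈ P.roots := hb.subset ha
  have hbR : b ∈ P.roots := hb.subset hbm
  have hsub : a - b ∈ P.roots := P.sub_mem hbR haR hne hpos
  have hz : a ∈ AddSubmonoid.closure (Δ : Set V) := AddSubmonoid.subset_closure ha
  have hz' : b ∈ AddSubmonoid.closure (Δ : Set V) := AddSubmonoid.subset_closure hbm
  rcases hb.pos_or_neg _ hsub with h | h
  · -- a - b positive: a = (a-b) + b, coefficient of b in a is ≥ 1 but must be 0
    have he : (a - b) + b = a := by abel
    have hcoeff : coeffs Δ a b = coeffs Δ (a-b) b + coeffs Δ b b := by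
      have h0 := coeffs_add hb h hz' hbm
      rwa [he] at h0
    rw [coeffs_simple hb ha hbm, if_neg (fun hh => hne hh.symm),
      coeffs_simple hb hbm hbm, if_pos rfl] at hcoeff
    omega
  · have he : (-(a - b)) + a = b := by abel
    have hcoeff : coeffs Δ b a = coeffs Δ (-(a-b)) a + coeffs Δ a a := by
      have h0 := coeffs_add hb h hz ha
      rwa [he] at h0
    rw [coeffs_simple hb hbm ha, if_neg hne, coeffs_simple hb ha ha, if_pos rfl] at hcoeff
    omega

variable {P Δ} in
/-- an integral combination which is a nonnegative combination of the base is a nonnegative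
combination of the subset -/
lemma zcl_to_ncl (hb : P.IsBase Δ) {S : Finset V} (hS : S ⊆ Δ) {x : V}
    (hz : x ∈ AddSubgroup.closure (S : Set V)) (hp : x ∈ AddSubmonoid.closure (Δ : Set V)) :
    x ∈ AddSubmonoid.closure (S : Set V) := by
  obtain ⟨z, hzrep⟩ := mem_zcl_iff.1 hz
  have hxk : ∑ a ∈ Δ, (if a ∈ S then ((z a : k)) else 0) • a
      = ∑ a ∈ Δ, ((coeffs Δ x a : k)) • a := by
    have l1 : ∑ a ∈ S, (if a ∈ S then ((z a : k)) else 0) • a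
        = ∑ a ∈ Δ, (if a ∈ S then ((z a : k)) else 0) • a :=
      Finset.sum_subset hS (fun a _ h2 => by rw [if_neg h2, zero_smul])
    rw [← l1, Finset.sum_congr rfl (fun a ha => by rw [if_pos ha]),
      Finset.sum_congr rfl (fun a (_ : a ∈ S) => Int.cast_smul_eq_zsmul k (z a) a), ← hzrep,
      Finset.sum_congr rfl (fun a (_ : a ∈ Δ) => Nat.cast_smul_eq_nsmul k (coeffs Δ x a) a),
      ← coeffs_spec Δ hp]
  have heq := base_indep_k Δ hb hxk
  refine mem_ncl_iff.2 ⟨coeffs Δ x, ?_⟩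
  conv_lhs => rw [hzrep]
  refine Finset.sum_congr rfl fun a ha => ?_
  have h1 := heq a (hS ha)
  rw [if_pos ha] at h1
  rw [← Nat.cast_smul_eq_nsmul k, ← h1, Int.cast_smul_eq_zsmul]

variable {P Δ} in
lemma pos_or_neg_zcl (hb : P.IsBase Δ) {S : Finset V} (hS : S ⊆ Δ) {α : V}
    (hα : α ∈ P.roots) (hz : α ∈ AddSubgroup.closure (S : Set V)) :
    α ∈ AddSubmonoid.closure (S : Set V) ∨ -α ∈ AddSubmonoid.closure (S : Set V) := by
  rcases hb.pos_or_neg α hα with h | h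
  · exact Or.inl (zcl_to_ncl hb hS hz h)
  · exact Or.inr (zcl_to_ncl hb hS (AddSubgroup.neg_mem _ hz) h)

variable {P Δ} in
/-- representation of an element of `ℕS` over `S` by the global coefficients -/
lemma coeffs_spec_subset (hb : P.IsBase Δ) {S : Finset V} (hS : S ⊆ Δ) {x : V}
    (hx : x ∈ AddSubmonoid.closure (S : Set V)) : x = ∑ a ∈ S, coeffs Δ x a • a := by
  obtain ⟨hx', hsupp⟩ := (mem_ncl_iff_supp hb hS).1 hx
  calc x = ∑ a ∈ Δ, coeffs Δ x a • a := coeffs_spec Δ hx'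
  _ = ∑ a ∈ S, coeffs Δ x a • a := by
      refine (Finset.sum_subset hS fun a haΔ haS => ?_).symm
      have : coeffs Δ x a = 0 := by
        by_contra h
        exact haS (hsupp (Finset.mem_filter.2 ⟨haΔ, h⟩))
      simp [this]

variable {P Δ} in
/-- every positive root pairs positively with some element of its support -/
lemma engine (hb : P.IsBase Δ) {α : V} (hα : α ∈ P.roots)
    (hp : α ∈ AddSubmonoid.closure (Δ : Set V)) :
    ∃ a ∈ Δ, coeffs Δ α a ≠ 0 ∧ 0 < P.pairInt a α := by
  have h2 : ∑ a ∈ Δ, (coeffs Δ α a : ℤ) * P.pairInt a α = 2 := by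
    rw [← P.pairInt_expand hα hα (fun a ha => hb.subset ha) (coeffs_spec Δ hp)]
    exact P.pair_self α hα
  by_contra hcon
  push_neg at hcon
  have hle : ∑ a ∈ Δ, (coeffs Δ α a : ℤ) * P.pairInt a α ≤ 0 := by
    refine Finset.sum_nonpos fun a ha => ?_
    by_cases hc : coeffs Δ α a = 0
    · simp [hc]
    · have := hcon a ha hc
      have hnn : (0:ℤ) ≤ (coeffs Δ α a : ℤ) := Int.ofNat_nonneg _
      nlinarith
  omega

end Base

section Components

variable {P Δ} (hb : P.IsBase Δ)

include hb in
lemma pair_nonzero_symm {S : Finset V} (hS : S ⊆ Δ) {a b : V} (ha : a ∈ S) (hbm : b ∈ S)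
    (h : P.pairInt a b ≠ 0) : P.pairInt b a ≠ 0 := by
  by_cases hab : a = b
  · subst hab; exact h
  · have haR := hb.subset (hS ha)
    have hbR := hb.subset (hS hbm)
    have h2 : a ≠ -b := ne_neg_of_pos hb haR (AddSubmonoid.subset_closure (hS ha))
      (AddSubmonoid.subset_closure (hS hbm))
    intro hz
    exact h ((P.pair_sign_zero hbR haR hab h2).2 hz)

include hb in
lemma linked_symm {S : Finset V} (hS : S ⊆ Δ) : Symmetric (P.Linked S) := by
  have hsy : Std.Symm (fun a b : V => a ∈ S ∧ b ∈ S ∧ P.pairInt a b ≠ 0) :=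
    ⟨fun x y hxy => ⟨hxy.2.1, hxy.1, pair_nonzero_symm hb hS hxy.1 hxy.2.1 hxy.2.2⟩⟩
  exact fun x y h => (Relation.ReflTransGen.stdSymm (r := fun a b : V => a ∈ S ∧ b ∈ S ∧ P.pairInt a b ≠ 0)).symm x y h

variable (P) in
lemma mem_component {S : Finset V} {a b : V} :
    b ∈ P.component S a ↔ b ∈ S ∧ P.Linked S a b := Finset.mem_filter

variable (P) in
lemma component_subset {S : Finset V} {a : V} : P.component S a ⊆ S :=
  Finset.filter_subset _ _

variable (P) in
lemma self_mem_component {S : Finset V} {a : V} (ha : a ∈ S) : a ∈ P.component S a :=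
  (P.mem_component).2 ⟨ha, Relation.ReflTransGen.refl⟩

variable (P) in
lemma mem_components_iff {S : Finset V} {C : Finset V} :
    C ∈ P.components S ↔ ∃ a ∈ S, C = P.component S a := by
  rw [components, Finset.mem_image]
  constructor
  · rintro ⟨a, ha, rfl⟩; exact ⟨a, ha, rfl⟩
  · rintro ⟨a, ha, rfl⟩; exact ⟨a, ha, rfl⟩

include hb in
lemma component_eq_of_linked {S : Finset V} (hS : S ⊆ Δ) {a b : V} (ha : a ∈ S) (hbm : b ∈ S)
    (h : P.Linked S a b) : P.component S a = P.component S b := by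
  ext x
  simp only [mem_component]
  exact ⟨fun ⟨hx, hax⟩ => ⟨hx, ((linked_symm hb hS h).trans hax)⟩,
    fun ⟨hx, hbx⟩ => ⟨hx, h.trans hbx⟩⟩

include hb in
lemma components_disjoint {S : Finset V} (hS : S ⊆ Δ) {C1 C2 : Finset V}
    (h1 : C1 ∈ P.components S) (h2 : C2 ∈ P.components S) (hne : C1 ≠ C2) :
    Disjoint C1 C2 := by
  obtain ⟨a1, ha1, rfl⟩ := (P.mem_components_iff).1 h1
  obtain ⟨a2, ha2, rfl⟩ := (P.mem_components_iff).1 h2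
  rw [Finset.disjoint_left]
  intro x hx1 hx2
  obtain ⟨hxS, hl1⟩ := (P.mem_component).1 hx1
  obtain ⟨_, hl2⟩ := (P.mem_component).1 hx2
  exact hne (component_eq_of_linked hb hS ha1 ha2 (hl1.trans (linked_symm hb hS hl2)))

variable (P) in
lemma linked_restrict {S C : Finset V} {x y : V} (h : P.Linked S x y) (hx : x ∈ C)
    (hmem : ∀ z, P.Linked S x z → z ∈ C) : P.Linked C x y := by
  have main : ∀ a, Relation.ReflTransGen (fun u v => u ∈ S ∧ v ∈ S ∧ P.pairInt u v ≠ 0) a y →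
      P.Linked S x a → P.Linked C a y := by
    intro a ha
    induction ha using Relation.ReflTransGen.head_induction_on with
    | refl => intro _; exact Relation.ReflTransGen.refl
    | @head u c hstep htail ih =>
        intro hxu
        have hxc : P.Linked S x c := hxu.tail hstep
        exact Relation.ReflTransGen.head ⟨hmem u hxu, hmem c hxc, hstep.2.2⟩ (ih hxc)
  exact main x h Relation.ReflTransGen.refl

include hb in
lemma component_connected {S : Finset V} (hS : S ⊆ Δ) {C : Finset V}
    (hC : C ∈ P.components S) : P.IsConnected C := by
  obtain ⟨a, ha, rfl⟩ := (P.mem_components_iff).1 hC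
  refine ⟨⟨a, P.self_mem_component ha⟩, fun x hx y hy => ?_⟩
  obtain ⟨hxS, hax⟩ := (P.mem_component).1 hx
  obtain ⟨hyS, hay⟩ := (P.mem_component).1 hy
  have hxy : P.Linked S x y := (linked_symm hb hS hax).trans hay
  refine P.linked_restrict hxy hx fun z hz => ?_
  have haz : P.Linked S a z := hax.trans hz
  have hzS : z ∈ S := by
    rcases Relation.ReflTransGen.cases_tail haz with h | ⟨c, _, hstep'⟩
    · rw [h]; exact ha
    · exact hstep'.2.1
  exact (P.mem_component).2 ⟨hzS, haz⟩

include hb in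
lemma mem_posRootsOf_component {S : Finset V} (hS : S ⊆ Δ) :
    ∀ n {α : V}, htF Δ α ≤ n → α ∈ P.posRootsOf S →
      ∃ C ∈ P.components S, α ∈ P.posRootsOf C := by
  intro n
  induction n with
  | zero =>
      intro α hht hα
      rw [posRootsOf, Finset.mem_filter] at hα
      have hnclΔ : α ∈ AddSubmonoid.closure (Δ : Set V) :=
        AddSubmonoid.closure_mono (Finset.coe_subset.2 hS) hα.2
      have h0 : α = 0 := (htF_eq_zero_iff hb hnclΔ).1 (Nat.le_zero.1 hht)
      exact absurd h0 (P.ne_zero α hα.1)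
  | succ n IH =>
      intro α hht hα
      obtain ⟨hαR, hαS⟩ := Finset.mem_filter.1 hα
      by_cases hαmem : α ∈ S
      · exact ⟨P.component S α, (P.mem_components_iff).2 ⟨α, hαmem, rfl⟩,
          Finset.mem_filter.2 ⟨hαR, AddSubmonoid.subset_closure (P.self_mem_component hαmem)⟩⟩
      · have hnclΔ : α ∈ AddSubmonoid.closure (Δ : Set V) :=
          AddSubmonoid.closure_mono (Finset.coe_subset.2 hS) hαS
        obtain ⟨a, haΔ, hca, hpa⟩ := engine hb hαR hnclΔ
        have hasupp : a ∈ suppF Δ α := Finset.mem_filter.2 ⟨haΔ, hca⟩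
        have hsuppS : suppF Δ α ⊆ S := ((mem_ncl_iff_supp hb hS).1 hαS).2
        have haS : a ∈ S := hsuppS hasupp
        have haR : a ∈ P.roots := hb.subset haΔ
        have hanclΔ : a ∈ AddSubmonoid.closure (Δ : Set V) := AddSubmonoid.subset_closure haΔ
        have hane : a ≠ α := fun h => hαmem (h ▸ haS)
        have hane2 : a ≠ -α := ne_neg_of_pos hb haR hanclΔ hnclΔ
        have hpαa : 0 < P.pairInt α a := P.pair_sign_pos hαR haR hane hane2 hpa
        have hβR : α - a ∈ P.roots := P.sub_mem haR hαR (fun h => hαmem (h ▸ haS)) hpαa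
        set β := α - a with hβdef
        have hβα : α = β + a := by rw [hβdef]; abel
        have hrepS : α = ∑ x ∈ S, coeffs Δ α x • x := coeffs_spec_subset hb hS hαS
        have hβS : β ∈ AddSubmonoid.closure (S : Set V) := by
          refine mem_ncl_iff.2 ⟨fun x => coeffs Δ α x - (if x = a then 1 else 0), ?_⟩
          have hsplit : ∀ x ∈ S, coeffs Δ α x • x
              = (coeffs Δ α x - (if x = a then 1 else 0)) • x + (if x = a then 1 else 0) • x := by
            intro x hx
            rw [← add_smul]
            congr 1
            by_cases hxa : x = a
            · subst hxa
              rw [if_pos rfl]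
              have : coeffs Δ α x ≠ 0 := by
                intro h
                exact hca (by rw [← h])
              omega
            · rw [if_neg hxa]; omega
          have hsum : α = (∑ x ∈ S, (coeffs Δ α x - (if x = a then 1 else 0)) • x) + a := by
            conv_lhs => rw [hrepS]
            rw [Finset.sum_congr rfl hsplit, Finset.sum_add_distrib]
            congr 1
            have : ∀ x ∈ S, (if x = a then (1:ℕ) else 0) • x = if x = a then x else 0 := by
              intro x _; split <;> simp
            rw [Finset.sum_congr rfl this, Finset.sum_ite_eq' S a (fun x => x), if_pos haS]
          conv_lhs => rw [hβdef, hsum]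
          rw [add_sub_cancel_right]
        have hβΔ : β ∈ AddSubmonoid.closure (Δ : Set V) :=
          AddSubmonoid.closure_mono (Finset.coe_subset.2 hS) hβS
        have hβht : htF Δ β ≤ n := by
          have h1 : htF Δ (β + a) = htF Δ β + htF Δ a := htF_add hb hβΔ hanclΔ
          rw [← hβα] at h1
          rw [htF_simple hb haΔ] at h1
          omega
        obtain ⟨C, hC, hβC⟩ := IH hβht (Finset.mem_filter.2 ⟨hβR, hβS⟩)
        obtain ⟨hβR', hβnclC⟩ := Finset.mem_filter.1 hβC
        have hCS : C ⊆ S := by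
          obtain ⟨a0, _, rfl⟩ := (P.mem_components_iff).1 hC
          exact P.component_subset
        have hCΔ : C ⊆ Δ := hCS.trans hS
        have hinC : a ∈ C → ∃ C' ∈ P.components S, α ∈ P.posRootsOf C' := by
          intro haC
          refine ⟨C, hC, Finset.mem_filter.2 ⟨hαR, ?_⟩⟩
          rw [hβα]
          exact AddSubmonoid.add_mem _ hβnclC (AddSubmonoid.subset_closure haC)
        by_cases hneigh : ∃ b ∈ suppF Δ β, P.pairInt b a ≠ 0
        · obtain ⟨b, hbsupp, hbne⟩ := hneigh
          have hsuppC : suppF Δ β ⊆ C := ((mem_ncl_iff_supp hb hCΔ).1 hβnclC).2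
          have hbC : b ∈ C := hsuppC hbsupp
          obtain ⟨a0, ha0, hCdef⟩ := (P.mem_components_iff).1 hC
          have hbS : b ∈ S := hCS hbC
          have hstep : P.Linked S b a := Relation.ReflTransGen.single ⟨hbS, haS, hbne⟩
          have ha0b : P.Linked S a0 b := ((P.mem_component).1 (hCdef ▸ hbC)).2
          refine hinC ?_
          rw [hCdef]
          exact (P.mem_component).2 ⟨haS, ha0b.trans hstep⟩
        · push_neg at hneigh
          exfalso
          have hanotsupp : a ∉ suppF Δ β := fun h => by
            have h2 := hneigh a h
            rw [P.pair_self a haR] at h2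
            omega
          have hβrep : β = ∑ x ∈ suppF Δ β, coeffs Δ β x • x := by
            refine coeffs_spec_subset hb suppF_subset ?_
            exact (mem_ncl_iff_supp hb suppF_subset).2 ⟨hβΔ, Finset.Subset.refl _⟩
          have hβa : P.pairInt β a = 0 := by
            rw [P.pairInt_expand haR hβR' (fun x hx => hb.subset (suppF_subset hx)) hβrep]
            refine Finset.sum_eq_zero fun x hx => ?_
            rw [hneigh x hx, mul_zero]
          have hαa2 : P.pairInt α a = 2 := by
            have hk : ((P.pairInt α a : ℤ) : k) = ((2:ℤ):k) := by
              rw [P.pair_compat a haR α hαR, hβα, map_add, ← P.pair_compat a haR β hβR',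
                ← P.pair_compat a haR a haR, hβa, P.pair_self a haR]
              push_cast; ring
            exact_mod_cast hk
          have hroot : β - a ∈ P.roots := by
            have h := P.reflect_mem a haR α hαR
            rw [hαa2] at h
            have e : α - (2:ℤ) • a = β - a := by rw [hβdef, two_zsmul]; abel
            rwa [e] at h
          rcases hb.pos_or_neg _ hroot with h | h
          · have hc := coeffs_add hb h hanclΔ haΔ
            rw [show (β - a) + a = β from by abel] at hc
            rw [coeffs_simple hb haΔ haΔ, if_pos rfl] at hc
            have : coeffs Δ β a ≠ 0 := by omega
            exact hanotsupp (Finset.mem_filter.2 ⟨haΔ, this⟩)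
          · have hβne : β ≠ 0 := P.ne_zero _ hβR'
            have hsuppne : (suppF Δ β).Nonempty := by
              rcases Finset.eq_empty_or_nonempty (suppF Δ β) with hemp | hne
              · exact absurd (suppF_eq_empty hb hβΔ hemp) hβne
              · exact hne
            obtain ⟨b, hbsupp⟩ := hsuppne
            have hbΔ : b ∈ Δ := suppF_subset hbsupp
            have hbnea : b ≠ a := fun hh => hanotsupp (hh ▸ hbsupp)
            have hc := coeffs_add hb h hβΔ hbΔ
            rw [show (-(β - a)) + β = a from by abel] at hc
            rw [coeffs_simple hb haΔ hbΔ, if_neg hbnea] at hc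
            have hbz : coeffs Δ β b = 0 := by omega
            exact (Finset.mem_filter.1 hbsupp).2 hbz

include hb in
lemma posRootsOf_component_unique {S : Finset V} (hS : S ⊆ Δ) {C1 C2 : Finset V}
    (h1 : C1 ∈ P.components S) (h2 : C2 ∈ P.components S) {α : V}
    (hα1 : α ∈ P.posRootsOf C1) (hα2 : α ∈ P.posRootsOf C2) : C1 = C2 := by
  by_contra hne
  have hd := components_disjoint hb hS h1 h2 hne
  have hC1S : C1 ⊆ S := by
    obtain ⟨a0, _, rfl⟩ := (P.mem_components_iff).1 h1; exact P.component_subset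
  have hC2S : C2 ⊆ S := by
    obtain ⟨a0, _, rfl⟩ := (P.mem_components_iff).1 h2; exact P.component_subset
  obtain ⟨hαR, hα1'⟩ := Finset.mem_filter.1 hα1
  obtain ⟨_, hα2'⟩ := Finset.mem_filter.1 hα2
  have hs1 : suppF Δ α ⊆ C1 := ((mem_ncl_iff_supp hb (hC1S.trans hS)).1 hα1').2
  have hs2 : suppF Δ α ⊆ C2 := ((mem_ncl_iff_supp hb (hC2S.trans hS)).1 hα2').2
  have hnclΔ : α ∈ AddSubmonoid.closure (Δ : Set V) :=
    AddSubmonoid.closure_mono (Finset.coe_subset.2 (hC1S.trans hS)) hα1'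
  have hempty : suppF Δ α = ∅ := by
    rw [Finset.eq_empty_iff_forall_notMem]
    intro x hx
    exact (Finset.disjoint_left.1 hd) (hs1 hx) (hs2 hx)
  exact P.ne_zero α hαR (suppF_eq_empty hb hnclΔ hempty)

variable (P) in
lemma posRootsOf_mono {S1 S2 : Finset V} (h : S1 ⊆ S2) : P.posRootsOf S1 ⊆ P.posRootsOf S2 := by
  intro α hα
  obtain ⟨h1, h2⟩ := Finset.mem_filter.1 hα
  exact Finset.mem_filter.2 ⟨h1, AddSubmonoid.closure_mono (Finset.coe_subset.2 h) h2⟩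

variable (P) in
lemma posRootsOf_subset_rootsOf {S : Finset V} : P.posRootsOf S ⊆ P.rootsOf S := by
  intro α hα
  obtain ⟨h1, h2⟩ := Finset.mem_filter.1 hα
  exact Finset.mem_filter.2 ⟨h1, mem_zcl_of_mem_ncl h2⟩

/-- maximality predicate for the dominance order on positive roots supported in `S` -/
def PMax (S : Finset V) (M : V) : Prop :=
  M ∈ P.posRootsOf S ∧ ∀ γ ∈ P.posRootsOf S, γ - M ∈ AddSubmonoid.closure (S : Set V) → γ = M

include hb in
lemma exists_maximal_above {S : Finset V} (hS : S ⊆ Δ) {β : V} (hβ : β ∈ P.posRootsOf S) :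
    ∃ M, P.PMax S M ∧ M - β ∈ AddSubmonoid.closure (S : Set V) := by
  classical
  set T := (P.posRootsOf S).filter (fun γ => γ - β ∈ AddSubmonoid.closure (S : Set V)) with hT
  have hβT : β ∈ T := Finset.mem_filter.2 ⟨hβ, by rw [sub_self]; exact AddSubmonoid.zero_mem _⟩
  obtain ⟨M, hMT, hmax⟩ := Finset.exists_max_image T (htF Δ) ⟨β, hβT⟩
  obtain ⟨hMpos, hMβ⟩ := Finset.mem_filter.1 hMT
  refine ⟨M, ⟨hMpos, fun γ hγ hγM => ?_⟩, hMβ⟩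
  have hγβ : γ - β ∈ AddSubmonoid.closure (S : Set V) := by
    rw [show γ - β = (γ - M) + (M - β) from by abel]
    exact AddSubmonoid.add_mem _ hγM hMβ
  have hle := hmax γ (Finset.mem_filter.2 ⟨hγ, hγβ⟩)
  have hMΔ : M ∈ AddSubmonoid.closure (Δ : Set V) :=
    AddSubmonoid.closure_mono (Finset.coe_subset.2 hS) (Finset.mem_filter.1 hMpos).2
  have hγMΔ : γ - M ∈ AddSubmonoid.closure (Δ : Set V) :=
    AddSubmonoid.closure_mono (Finset.coe_subset.2 hS) hγM
  have hadd : htF Δ ((γ - M) + M) = htF Δ (γ - M) + htF Δ M := htF_add hb hγMΔ hMΔ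
  rw [show (γ - M) + M = γ from by abel] at hadd
  have h0 : htF Δ (γ - M) = 0 := by omega
  have h1 := (htF_eq_zero_iff hb hγMΔ).1 h0
  rwa [sub_eq_zero] at h1

include hb in
lemma maximal_pair_nonneg {S : Finset V} (hS : S ⊆ Δ) {M : V} (hM : P.PMax S M) :
    ∀ a ∈ S, 0 ≤ P.pairInt M a := by
  intro a ha
  by_contra h
  push_neg at h
  obtain ⟨hMR, hMncl⟩ := Finset.mem_filter.1 hM.1
  have haR : a ∈ P.roots := hb.subset (hS ha)
  have hMΔ : M ∈ AddSubmonoid.closure (Δ : Set V) :=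
    AddSubmonoid.closure_mono (Finset.coe_subset.2 hS) hMncl
  have hMne : M ≠ -a := ne_neg_of_pos hb hMR hMΔ (AddSubmonoid.subset_closure (hS ha))
  have hadd : M + a ∈ P.roots := P.add_mem haR hMR hMne h
  have haddpos : M + a ∈ P.posRootsOf S := Finset.mem_filter.2
    ⟨hadd, AddSubmonoid.add_mem _ hMncl (AddSubmonoid.subset_closure ha)⟩
  have heq := hM.2 (M + a) haddpos
    (by rw [show M + a - M = a from by abel]; exact AddSubmonoid.subset_closure ha)
  have : a = 0 := by
    have := heq
    rwa [add_eq_left] at this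
  exact P.ne_zero a haR this

variable (P) in
lemma adjacent_outside {S T : Finset V} {x y : V} (h : P.Linked S x y) (hx : x ∈ T)
    (hy : y ∉ T) : ∃ u ∈ T, ∃ v ∈ S, v ∉ T ∧ P.pairInt u v ≠ 0 := by
  have main : ∀ a, Relation.ReflTransGen (fun u v => u ∈ S ∧ v ∈ S ∧ P.pairInt u v ≠ 0) a y →
      a ∈ T → ∃ u ∈ T, ∃ v ∈ S, v ∉ T ∧ P.pairInt u v ≠ 0 := by
    intro a ha
    induction ha using Relation.ReflTransGen.head_induction_on with
    | refl => intro h'; exact absurd h' hy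
    | @head u c hstep htail ih =>
        intro hu
        by_cases hc : c ∈ T
        · exact ih hc
        · exact ⟨u, hu, c, hstep.2.1, hc, hstep.2.2⟩
  exact main x h hx

include hb in
lemma maximal_full_supp {S : Finset V} (hS : S ⊆ Δ) (hcon : P.IsConnected S) {M : V}
    (hM : P.PMax S M) : ∀ a ∈ S, a ∈ suppF Δ M := by
  intro a ha
  by_contra hnot
  obtain ⟨hMR, hMncl⟩ := Finset.mem_filter.1 hM.1
  have hMΔ : M ∈ AddSubmonoid.closure (Δ : Set V) :=
    AddSubmonoid.closure_mono (Finset.coe_subset.2 hS) hMncl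
  have hTsub : suppF Δ M ⊆ S := ((mem_ncl_iff_supp hb hS).1 hMncl).2
  have hTne : (suppF Δ M).Nonempty := by
    rcases Finset.eq_empty_or_nonempty (suppF Δ M) with hemp | hne
    · exact absurd (suppF_eq_empty hb hMΔ hemp) (P.ne_zero M hMR)
    · exact hne
  obtain ⟨x, hx⟩ := hTne
  have hlink : P.Linked S x a := hcon.2 x (hTsub hx) a ha
  obtain ⟨u, huT, v, hvS, hvT, hpair⟩ := P.adjacent_outside hlink hx hnot
  have hrep : M = ∑ z ∈ suppF Δ M, coeffs Δ M z • z :=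
    coeffs_spec_subset hb suppF_subset
      ((mem_ncl_iff_supp hb suppF_subset).2 ⟨hMΔ, Finset.Subset.refl _⟩)
  have hexp : P.pairInt M v = ∑ z ∈ suppF Δ M, (coeffs Δ M z : ℤ) * P.pairInt z v :=
    P.pairInt_expand (hb.subset (hS hvS)) hMR (fun z hz => hb.subset (suppF_subset hz)) hrep
  have hneg : P.pairInt M v < 0 := by
    rw [hexp]
    have hle : ∀ z ∈ suppF Δ M, (coeffs Δ M z : ℤ) * P.pairInt z v ≤ 0 := by
      intro z hz
      have hzv : z ≠ v := fun h => hvT (h ▸ hz)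
      have hzp := pair_simple_nonpos hb (suppF_subset hz) (hS hvS) hzv
      have h1 : (0:ℤ) ≤ (coeffs Δ M z : ℤ) := Int.ofNat_nonneg _
      nlinarith
    have hlt : ∃ z ∈ suppF Δ M, (coeffs Δ M z : ℤ) * P.pairInt z v < 0 := by
      refine ⟨u, huT, ?_⟩
      have hczu : coeffs Δ M u ≠ 0 := (Finset.mem_filter.1 huT).2
      have h1 : (1:ℤ) ≤ (coeffs Δ M u : ℤ) := by
        have := Nat.pos_of_ne_zero hczu
        exact_mod_cast this
      have huv : u ≠ v := fun h => hvT (h ▸ huT)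
      have hzp := pair_simple_nonpos hb (suppF_subset huT) (hS hvS) huv
      have hne : P.pairInt u v ≠ 0 := hpair
      have : P.pairInt u v ≤ -1 := by omega
      nlinarith
    calc ∑ z ∈ suppF Δ M, (coeffs Δ M z : ℤ) * P.pairInt z v
        < ∑ _z ∈ suppF Δ M, (0:ℤ) := Finset.sum_lt_sum hle hlt
    _ = 0 := Finset.sum_const_zero
  have := maximal_pair_nonneg hb hS hM v hvS
  omega

variable (P) in
lemma pair_rev_nonneg {a M : V} (haR : a ∈ P.roots) (hMR : M ∈ P.roots) (h2 : M ≠ -a)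
    (h : 0 ≤ P.pairInt M a) : 0 ≤ P.pairInt a M := by
  by_cases h1 : M = a
  · subst h1; rw [P.pair_self M hMR]; omega
  · rcases P.pair_sign haR hMR h1 h2 with ⟨hz1, hz2⟩ | ⟨hge, _⟩
    · omega
    · nlinarith

include hb in
lemma maximal_unique {S : Finset V} (hS : S ⊆ Δ) (hcon : P.IsConnected S) {M M' : V}
    (hM : P.PMax S M) (hM' : P.PMax S M') : M = M' := by
  by_contra hne
  obtain ⟨hMR, hMncl⟩ := Finset.mem_filter.1 hM.1
  obtain ⟨hM'R, hM'ncl⟩ := Finset.mem_filter.1 hM'.1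
  have hMΔ : M ∈ AddSubmonoid.closure (Δ : Set V) :=
    AddSubmonoid.closure_mono (Finset.coe_subset.2 hS) hMncl
  have hM'Δ : M' ∈ AddSubmonoid.closure (Δ : Set V) :=
    AddSubmonoid.closure_mono (Finset.coe_subset.2 hS) hM'ncl
  have hexp : P.pairInt M' M = ∑ a ∈ Δ, (coeffs Δ M' a : ℤ) * P.pairInt a M :=
    P.pairInt_expand hMR hM'R (fun a ha => hb.subset ha) (coeffs_spec Δ hM'Δ)
  obtain ⟨a0, ha0Δ, hc0, hp0⟩ := engine hb hMR hMΔ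
  have ha0S : a0 ∈ S := ((mem_ncl_iff_supp hb hS).1 hMncl).2 (Finset.mem_filter.2 ⟨ha0Δ, hc0⟩)
  have ha0supp' : a0 ∈ suppF Δ M' := maximal_full_supp hb hS hcon hM' a0 ha0S
  have hterm : ∀ a ∈ Δ, 0 ≤ (coeffs Δ M' a : ℤ) * P.pairInt a M := by
    intro a ha
    by_cases hc : coeffs Δ M' a = 0
    · simp [hc]
    · have haS : a ∈ S := ((mem_ncl_iff_supp hb hS).1 hM'ncl).2 (Finset.mem_filter.2 ⟨ha, hc⟩)
      have h2 : M ≠ -a := ne_neg_of_pos hb hMR hMΔ (AddSubmonoid.subset_closure ha)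
      have hnn : 0 ≤ P.pairInt a M :=
        P.pair_rev_nonneg (hb.subset ha) hMR h2 (maximal_pair_nonneg hb hS hM a haS)
      exact mul_nonneg (Int.ofNat_nonneg _) hnn
  have hpos : 0 < P.pairInt M' M := by
    rw [hexp]
    have hlt : ∃ a ∈ Δ, (0:ℤ) < (coeffs Δ M' a : ℤ) * P.pairInt a M := by
      refine ⟨a0, ha0Δ, ?_⟩
      have h1 : (1:ℤ) ≤ (coeffs Δ M' a0 : ℤ) := by
        have := Nat.pos_of_ne_zero ((Finset.mem_filter.1 ha0supp').2)
        exact_mod_cast this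
      nlinarith
    obtain ⟨a1, ha1, hlt1⟩ := hlt
    calc (0:ℤ) = ∑ _a ∈ Δ, (0:ℤ) := Finset.sum_const_zero.symm
    _ < _ := Finset.sum_lt_sum (fun a ha => hterm a ha) ⟨a1, ha1, hlt1⟩
  have hsub : M' - M ∈ P.roots := P.sub_mem hMR hM'R (fun h => hne h.symm) hpos
  have hzcl : M' - M ∈ AddSubgroup.closure (S : Set V) :=
    AddSubgroup.sub_mem _ (mem_zcl_of_mem_ncl hM'ncl) (mem_zcl_of_mem_ncl hMncl)
  rcases pos_or_neg_zcl hb hS hsub hzcl with h | h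
  · exact hne (hM.2 M' hM'.1 h).symm
  · have h' : M - M' ∈ AddSubmonoid.closure (S : Set V) := by rwa [neg_sub] at h
    exact hne (hM'.2 M hM.1 h')

include hb in
lemma exists_highest {S : Finset V} (hS : S ⊆ Δ) (hcon : P.IsConnected S) :
    ∃ ε, P.IsHighestRoot S ε := by
  obtain ⟨a, haS⟩ := hcon.1
  have hapos : a ∈ P.posRootsOf S :=
    Finset.mem_filter.2 ⟨hb.subset (hS haS), AddSubmonoid.subset_closure haS⟩
  obtain ⟨M, hM, _⟩ := exists_maximal_above hb hS hapos
  refine ⟨M, hM.1, fun γ hγ => ?_⟩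
  obtain ⟨hγR, hγz⟩ := Finset.mem_filter.1 hγ
  rcases pos_or_neg_zcl hb hS hγR hγz with h | h
  · obtain ⟨M', hM', hM'γ⟩ := exists_maximal_above hb hS (Finset.mem_filter.2 ⟨hγR, h⟩)
    rw [maximal_unique hb hS hcon hM hM']
    exact hM'γ
  · rw [sub_eq_add_neg]
    exact AddSubmonoid.add_mem _ (Finset.mem_filter.1 hM.1).2 h

include hb in
lemma highestRoot_spec {S : Finset V} (hS : S ⊆ Δ) (hcon : P.IsConnected S) :
    P.IsHighestRoot S (P.highestRoot S) := by
  obtain ⟨ε, hε⟩ := exists_highest hb hS hcon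
  rw [highestRoot, dif_pos ⟨ε, hε⟩]
  exact (⟨ε, hε⟩ : ∃ ε, P.IsHighestRoot S ε).choose_spec

include hb in
lemma highest_maximal {S : Finset V} (hS : S ⊆ Δ) {ε : V} (hhr : P.IsHighestRoot S ε) :
    P.PMax S ε := by
  refine ⟨hhr.1, fun γ hγ hγε => ?_⟩
  have hεγ : ε - γ ∈ AddSubmonoid.closure (S : Set V) :=
    hhr.2 γ (P.posRootsOf_subset_rootsOf hγ)
  have hγεΔ : γ - ε ∈ AddSubmonoid.closure (Δ : Set V) :=
    AddSubmonoid.closure_mono (Finset.coe_subset.2 hS) hγε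
  have hεγΔ : ε - γ ∈ AddSubmonoid.closure (Δ : Set V) :=
    AddSubmonoid.closure_mono (Finset.coe_subset.2 hS) hεγ
  have hsum : htF Δ ((γ - ε) + (ε - γ)) = htF Δ (γ - ε) + htF Δ (ε - γ) :=
    htF_add hb hγεΔ hεγΔ
  rw [show (γ - ε) + (ε - γ) = 0 from by abel] at hsum
  have h00 : htF Δ (0 : V) = 0 := (htF_eq_zero_iff hb (AddSubmonoid.zero_mem _)).2 rfl
  have h0 : htF Δ (γ - ε) = 0 := by omega
  have h1 := (htF_eq_zero_iff hb hγεΔ).1 h0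
  rwa [sub_eq_zero] at h1

include hb in
lemma pair_highest_nonneg {S : Finset V} (hS : S ⊆ Δ) {ε : V} (hhr : P.IsHighestRoot S ε)
    {α : V} (hα : α ∈ P.posRootsOf S) : 0 ≤ P.pairInt α ε := by
  by_contra h
  push_neg at h
  obtain ⟨hεR, hεncl⟩ := Finset.mem_filter.1 hhr.1
  obtain ⟨hαR, hαncl⟩ := Finset.mem_filter.1 hα
  have hαΔ : α ∈ AddSubmonoid.closure (Δ : Set V) :=
    AddSubmonoid.closure_mono (Finset.coe_subset.2 hS) hαncl
  have hεΔ : ε ∈ AddSubmonoid.closure (Δ : Set V) :=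
    AddSubmonoid.closure_mono (Finset.coe_subset.2 hS) hεncl
  have hαne : α ≠ -ε := ne_neg_of_pos hb hαR hαΔ hεΔ
  have hadd : α + ε ∈ P.roots := P.add_mem hεR hαR hαne h
  have haddz : α + ε ∈ P.rootsOf S := Finset.mem_filter.2
    ⟨hadd, AddSubgroup.add_mem _ (mem_zcl_of_mem_ncl hαncl) (mem_zcl_of_mem_ncl hεncl)⟩
  have h2 := hhr.2 (α + ε) haddz
  rw [show ε - (α + ε) = -α from by abel] at h2
  exact not_both_pos hb hαR hαΔ (AddSubmonoid.closure_mono (Finset.coe_subset.2 hS) h2)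

variable (P) in
lemma zeroPart_subset {S : Finset V} : P.zeroPart S ⊆ S := Finset.filter_subset _ _

include hb in
lemma mem_zeroPart_ncl {S : Finset V} (hS : S ⊆ Δ) (hcon : P.IsConnected S) {α : V}
    (hα : α ∈ P.posRootsOf S) :
    P.pairInt α (P.highestRoot S) = 0 ↔
      α ∈ AddSubmonoid.closure ((P.zeroPart S : Finset V) : Set V) := by
  have hhr := highestRoot_spec hb hS hcon
  have hεR : P.highestRoot S ∈ P.roots := (Finset.mem_filter.1 hhr.1).1
  obtain ⟨hαR, hαncl⟩ := Finset.mem_filter.1 hα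
  constructor
  · intro h0
    refine (mem_ncl_iff_supp hb ((P.zeroPart_subset).trans hS)).2
      ⟨AddSubmonoid.closure_mono (Finset.coe_subset.2 hS) hαncl, fun x hxsupp => ?_⟩
    have hsuppS : suppF Δ α ⊆ S := ((mem_ncl_iff_supp hb hS).1 hαncl).2
    have hxS : x ∈ S := hsuppS hxsupp
    have hrep : α = ∑ z ∈ S, coeffs Δ α z • z := coeffs_spec_subset hb hS hαncl
    have hexp : P.pairInt α (P.highestRoot S)
        = ∑ z ∈ S, (coeffs Δ α z : ℤ) * P.pairInt z (P.highestRoot S) :=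
      P.pairInt_expand hεR hαR (fun z hz => hb.subset (hS hz)) hrep
    have hterms : ∀ z ∈ S, 0 ≤ (coeffs Δ α z : ℤ) * P.pairInt z (P.highestRoot S) := by
      intro z hz
      refine mul_nonneg (Int.ofNat_nonneg _) ?_
      exact pair_highest_nonneg hb hS hhr
        (Finset.mem_filter.2 ⟨hb.subset (hS hz), AddSubmonoid.subset_closure hz⟩)
    have hallzero := (Finset.sum_eq_zero_iff_of_nonneg hterms).1 (by rw [← hexp, h0]) x hxS
    have hcx : coeffs Δ α x ≠ 0 := (Finset.mem_filter.1 hxsupp).2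
    have hxz : P.pairInt x (P.highestRoot S) = 0 := by
      rcases mul_eq_zero.1 hallzero with h | h
      · exact absurd (by exact_mod_cast h) hcx
      · exact h
    exact Finset.mem_filter.2 ⟨hxS, hxz⟩
  · intro hncl
    have hrep : α = ∑ z ∈ P.zeroPart S, coeffs Δ α z • z :=
      coeffs_spec_subset hb ((P.zeroPart_subset).trans hS) hncl
    rw [P.pairInt_expand hεR hαR
      (fun z hz => hb.subset (hS (P.zeroPart_subset hz))) hrep]
    refine Finset.sum_eq_zero fun z hz => ?_
    rw [(Finset.mem_filter.1 hz).2, mul_zero]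

include hb in
lemma gamma_subset_pos {S : Finset V} (hS : S ⊆ Δ) (hcon : P.IsConnected S) :
    P.gamma S ⊆ P.posRootsOf S := by
  have hhr := highestRoot_spec hb hS hcon
  have hεR : P.highestRoot S ∈ P.roots := (Finset.mem_filter.1 hhr.1).1
  intro α hα
  obtain ⟨hαroot, hαpos⟩ := Finset.mem_filter.1 hα
  obtain ⟨hαR, hαz⟩ := Finset.mem_filter.1 hαroot
  rcases pos_or_neg_zcl hb hS hαR hαz with h | h
  · exact Finset.mem_filter.2 ⟨hαR, h⟩
  · exfalso
    have hnegpos : -α ∈ P.posRootsOf S := Finset.mem_filter.2 ⟨P.neg_mem hαR, h⟩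
    have hnn := pair_highest_nonneg hb hS hhr hnegpos
    rw [P.pairInt_neg_left hεR hαR] at hnn
    omega

include hb in
lemma pos_split {S : Finset V} (hS : S ⊆ Δ) (hcon : P.IsConnected S) {α : V}
    (hα : α ∈ P.posRootsOf S) :
    α ∈ P.gamma S ∨ α ∈ P.posRootsOf (P.zeroPart S) := by
  have hhr := highestRoot_spec hb hS hcon
  have hge := pair_highest_nonneg hb hS hhr hα
  obtain ⟨hαR, hαncl⟩ := Finset.mem_filter.1 hα
  rcases lt_or_eq_of_le hge with hlt | heq
  · left
    exact Finset.mem_filter.2 ⟨Finset.mem_filter.2 ⟨hαR, mem_zcl_of_mem_ncl hαncl⟩, hlt⟩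
  · right
    exact Finset.mem_filter.2 ⟨hαR, (mem_zeroPart_ncl hb hS hcon hα).1 heq.symm⟩

include hb in
lemma gamma_zeroPart_disjoint {S : Finset V} (hS : S ⊆ Δ) (hcon : P.IsConnected S) {α : V}
    (h1 : α ∈ P.gamma S) (h2 : α ∈ P.posRootsOf (P.zeroPart S)) : False := by
  have hαpos : α ∈ P.posRootsOf S := (P.posRootsOf_mono P.zeroPart_subset) h2
  have h0 : P.pairInt α (P.highestRoot S) = 0 :=
    (mem_zeroPart_ncl hb hS hcon hαpos).2 (Finset.mem_filter.1 h2).2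
  have hpos : 0 < P.pairInt α (P.highestRoot S) := (Finset.mem_filter.1 h1).2
  omega

include hb in
lemma zeroPart_ssubset {S : Finset V} (hS : S ⊆ Δ) (hcon : P.IsConnected S) :
    P.zeroPart S ⊂ S := by
  rw [Finset.ssubset_iff_of_subset P.zeroPart_subset]
  have hhr := highestRoot_spec hb hS hcon
  obtain ⟨hεR, hεncl⟩ := Finset.mem_filter.1 hhr.1
  have hεΔ : P.highestRoot S ∈ AddSubmonoid.closure (Δ : Set V) :=
    AddSubmonoid.closure_mono (Finset.coe_subset.2 hS) hεncl
  obtain ⟨a, haΔ, hca, hpa⟩ := engine hb hεR hεΔ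
  have haS : a ∈ S := ((mem_ncl_iff_supp hb hS).1 hεncl).2 (Finset.mem_filter.2 ⟨haΔ, hca⟩)
  refine ⟨a, haS, fun hz => ?_⟩
  have := (Finset.mem_filter.1 hz).2
  omega

end Components

section Cascade

variable {P Δ} (hb : P.IsBase Δ)

variable (P) in
lemma posRootsOf_empty : P.posRootsOf (∅ : Finset V) = ∅ := by
  rw [posRootsOf]
  refine Finset.filter_false_of_mem fun α hα hmem => ?_
  rw [Finset.coe_empty, AddSubmonoid.closure_empty, AddSubmonoid.mem_bot] at hmem
  exact P.ne_zero α hα hmem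

variable (P) in
lemma components_empty : P.components (∅ : Finset V) = ∅ := by
  rw [components, Finset.image_empty]

variable (P) in
lemma components_subset {S C : Finset V} (hC : C ∈ P.components S) : C ⊆ S := by
  obtain ⟨a, _, rfl⟩ := (P.mem_components_iff).1 hC
  exact P.component_subset

include hb in
lemma cascadeAux_fuel : ∀ N (S : Finset V), S.card ≤ N → S ⊆ Δ → ∀ n m, S.card < n →
    S.card < m → P.cascadeAux n S = P.cascadeAux m S := by
  intro N
  induction N with
  | zero =>
      intro S hcard hS n m hn hm
      have hSe : S = ∅ := Finset.card_eq_zero.1 (Nat.le_zero.1 hcard)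
      subst hSe
      obtain ⟨n', rfl⟩ : ∃ n', n = n' + 1 := ⟨n - 1, by omega⟩
      obtain ⟨m', rfl⟩ : ∃ m', m = m' + 1 := ⟨m - 1, by omega⟩
      rw [cascadeAux, cascadeAux, P.components_empty]
      simp
  | succ N ihN =>
      intro S hcard hS n m hn hm
      obtain ⟨n', rfl⟩ : ∃ n', n = n' + 1 := ⟨n - 1, by omega⟩
      obtain ⟨m', rfl⟩ : ∃ m', m = m' + 1 := ⟨m - 1, by omega⟩
      rw [cascadeAux, cascadeAux]
      refine Finset.biUnion_congr rfl fun C hC => ?_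
      have hCS : C ⊆ S := P.components_subset hC
      have hCΔ : C ⊆ Δ := hCS.trans hS
      have hCconn := component_connected hb hS hC
      have hzp : P.zeroPart C ⊂ C := zeroPart_ssubset hb hCΔ hCconn
      have hzpcard : (P.zeroPart C).card < S.card :=
        lt_of_lt_of_le (Finset.card_lt_card hzp) (Finset.card_le_card hCS)
      congr 1
      exact ihN (P.zeroPart C) (by omega) ((P.zeroPart_subset).trans hCΔ) n' m'
        (by omega) (by omega)

include hb in
lemma cascade_unfold {S : Finset V} (hS : S ⊆ Δ) :
    P.cascade S = (P.components S).biUnion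
      (fun C => insert C (P.cascade (P.zeroPart C))) := by
  rw [cascade, cascadeAux]
  refine Finset.biUnion_congr rfl fun C hC => ?_
  have hCS : C ⊆ S := P.components_subset hC
  have hCΔ : C ⊆ Δ := hCS.trans hS
  have hCconn := component_connected hb hS hC
  have hzp : P.zeroPart C ⊂ C := zeroPart_ssubset hb hCΔ hCconn
  have hzpcard : (P.zeroPart C).card < S.card :=
    lt_of_lt_of_le (Finset.card_lt_card hzp) (Finset.card_le_card hCS)
  congr 1
  rw [cascade]
  exact cascadeAux_fuel hb (P.zeroPart C).card (P.zeroPart C) le_rfl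
    ((P.zeroPart_subset).trans hCΔ) S.card ((P.zeroPart C).card + 1) hzpcard (lt_add_one _)

include hb in
lemma cascade_main : ∀ N (S : Finset V), S ⊆ Δ → S.card ≤ N →
    (∀ K ∈ P.cascade S, P.gamma K ⊆ P.posRootsOf S) ∧
    (∀ α ∈ P.posRootsOf S, ∃! K, K ∈ P.cascade S ∧ α ∈ P.gamma K) := by
  intro N
  induction N with
  | zero =>
      intro S hS hcard
      have hSe : S = ∅ := Finset.card_eq_zero.1 (Nat.le_zero.1 hcard)
      subst hSe
      have hcasc : P.cascade (∅ : Finset V) = ∅ := by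
        rw [cascade_unfold hb (Finset.empty_subset Δ), P.components_empty]
        simp
      constructor
      · intro K hK
        rw [hcasc] at hK
        exact absurd hK (Finset.notMem_empty K)
      · intro α hα
        rw [P.posRootsOf_empty] at hα
        exact absurd hα (Finset.notMem_empty α)
  | succ N ihN =>
      intro S hS hcard
      have hunfold := cascade_unfold hb hS
      have hloc : ∀ K, K ∈ P.cascade S → ∀ {α}, α ∈ P.gamma K →
          ∃ C' ∈ P.components S,
            (K = C' ∨ K ∈ P.cascade (P.zeroPart C')) ∧ α ∈ P.posRootsOf C' := by
        intro K hK α hαK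
        rw [hunfold] at hK
        obtain ⟨C', hC', hKC'⟩ := Finset.mem_biUnion.1 hK
        have hC'S : C' ⊆ S := P.components_subset hC'
        have hC'Δ : C' ⊆ Δ := hC'S.trans hS
        have hC'conn := component_connected hb hS hC'
        have hzp : P.zeroPart C' ⊂ C' := zeroPart_ssubset hb hC'Δ hC'conn
        rcases Finset.mem_insert.1 hKC' with rfl | hK' 
        · exact ⟨K, hC', Or.inl rfl, gamma_subset_pos hb hC'Δ hC'conn hαK⟩
        · have hzpcard : (P.zeroPart C').card ≤ N := by
            have h1 : (P.zeroPart C').card < C'.card := Finset.card_lt_card hzp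
            have h2 : C'.card ≤ S.card := Finset.card_le_card hC'S
            omega
          have hsub := (ihN (P.zeroPart C') ((P.zeroPart_subset).trans hC'Δ) hzpcard).1 K hK'
          exact ⟨C', hC', Or.inr hK',
            (P.posRootsOf_mono P.zeroPart_subset) (hsub hαK)⟩
      constructor
      · intro K hK α hαK
        obtain ⟨C', hC', _, hαC'⟩ := hloc K hK hαK
        exact (P.posRootsOf_mono (P.components_subset hC')) hαC'
      · intro α hα
        obtain ⟨C, hC, hαC⟩ := mem_posRootsOf_component hb hS (htF Δ α) le_rfl hα
        have hCS : C ⊆ S := P.components_subset hC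
        have hCΔ : C ⊆ Δ := hCS.trans hS
        have hCconn := component_connected hb hS hC
        have hzp : P.zeroPart C ⊂ C := zeroPart_ssubset hb hCΔ hCconn
        have hzpcard : (P.zeroPart C).card ≤ N := by
          have h1 : (P.zeroPart C).card < C.card := Finset.card_lt_card hzp
          have h2 : C.card ≤ S.card := Finset.card_le_card hCS
          omega
        have hzpΔ : P.zeroPart C ⊆ Δ := (P.zeroPart_subset).trans hCΔ
        rcases pos_split hb hCΔ hCconn hαC with hγ | hzpmem
        · refine ⟨C, ⟨?_, hγ⟩, ?_⟩
          · rw [hunfold]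
            exact Finset.mem_biUnion.2 ⟨C, hC, Finset.mem_insert_self _ _⟩
          · rintro K ⟨hK, hαK⟩
            obtain ⟨C', hC', hcase, hαC'⟩ := hloc K hK hαK
            have hCC' : C' = C := posRootsOf_component_unique hb hS hC' hC hαC' hαC
            subst hCC'
            rcases hcase with rfl | hK'
            · rfl
            · exfalso
              have hsub := (ihN (P.zeroPart C') ((P.zeroPart_subset).trans
                (((P.components_subset hC').trans hS))) (by
                  have h1 : (P.zeroPart C').card < C'.card := Finset.card_lt_card
                    (zeroPart_ssubset hb ((P.components_subset hC').trans hS)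
                      (component_connected hb hS hC'))
                  have h2 : C'.card ≤ S.card := Finset.card_le_card (P.components_subset hC')
                  omega)).1 K hK'
              exact gamma_zeroPart_disjoint hb ((P.components_subset hC').trans hS)
                (component_connected hb hS hC') hγ (hsub hαK)
        · obtain ⟨K0, ⟨hK0casc, hαK0⟩, huniq⟩ := (ihN (P.zeroPart C) hzpΔ hzpcard).2 α hzpmem
          refine ⟨K0, ⟨?_, hαK0⟩, ?_⟩
          · rw [hunfold]
            exact Finset.mem_biUnion.2 ⟨C, hC, Finset.mem_insert.2 (Or.inr hK0casc)⟩
          · rintro K ⟨hK, hαK⟩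
            obtain ⟨C', hC', hcase, hαC'⟩ := hloc K hK hαK
            have hCC' : C' = C := posRootsOf_component_unique hb hS hC' hC hαC'
              ((P.posRootsOf_mono P.zeroPart_subset) hzpmem)
            subst hCC'
            rcases hcase with rfl | hK'
            · exfalso
              exact gamma_zeroPart_disjoint hb ((P.components_subset hC').trans hS)
                (component_connected hb hS hC') hαK hzpmem
            · exact huniq K ⟨hK', hαK⟩

end Cascade



end RootSystemData

variable {k V : Type*} [Field k] [CharZero k] [AddCommGroup V] [Module k V]

/-- Let `R` be a reduced root system with base `Π` and positive roots `R₊`,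
and let `𝒦 = 𝒦(Π)` be the cascade.  Then `R₊` is the disjoint union of the sets
`Γ^K = {α ∈ R^K : ⟨α, ε_K^∨⟩ > 0}` for `K ∈ 𝒦`: each `Γ^K` is contained in `R₊` and every
positive root lies in `Γ^K` for exactly one `K ∈ 𝒦`. -/
theorem posRoots_disjoint_union_of_gamma
    (P : RootSystemData k V) (Δ : Finset V) (hbase : P.IsBase Δ) :
    (∀ K ∈ P.cascade Δ, P.gamma K ⊆ P.posRoots Δ) ∧
    (∀ α ∈ P.posRoots Δ, ∃! K, K ∈ P.cascade Δ ∧ α ∈ P.gamma K) :=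
  RootSystemData.cascade_main hbase Δ.card Δ (Finset.Subset.refl Δ) le_rfl
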